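/- Let ρ > 0 and λ > 0, and let f : ℝ → ℝ be defined by f(x) = ρ·max(x, 0). Then the Moreau envelope f_λ is differentiable on ℝ with derivative f_λ'(x) = min(max(x, 0), λρ)/λ for every x ∈ ℝ. -/

import Mathlib

open scoped RealInnerProductSpace BigOperators

private lemma sq_max_deriv (x : ℝ) :
    HasDerivAt (fun t : ℝ => max t 0 ^ 2) (2 * max x 0) x := by
  rcases lt_trichotomy x 0 with hx | hx | hx
  · have h0 : HasDerivAt (fun _ : ℝ => (0 : ℝ)) 0 x := hasDerivAt_const x 0
    have : (2 : ℝ) * max x 0 = 0 := by rw [max_eq_right hx.le]; ring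
    rw [this]
    apply h0.congr_of_eventuallyEq
    filter_upwards [Iio_mem_nhds hx] with t ht
    simp [max_eq_right (le_of_lt (Set.mem_Iio.mp ht))]
  · subst hx
    rw [hasDerivAt_iff_tendsto_slope]
    have heq : ∀ t ∈ ({(0:ℝ)}ᶜ : Set ℝ), max t 0 = slope (fun t : ℝ => max t 0 ^ 2) 0 t := by
      intro t ht
      have ht0 : t ≠ 0 := ht
      rcases le_total t 0 with h | h
      · simp [slope, max_eq_right h]
      · simp [slope, max_eq_left h, sq, ht0]
    have hmax : Filter.Tendsto (fun t : ℝ => max t 0) (nhdsWithin 0 {(0:ℝ)}ᶜ)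
        (nhds (2 * max (0:ℝ) 0)) := by
      have hc : Continuous (fun t : ℝ => max t 0) := continuous_id.max continuous_const
      have := hc.tendsto (0 : ℝ)
      simpa using this.mono_left nhdsWithin_le_nhds
    exact hmax.congr' (Filter.eventuallyEq_of_mem self_mem_nhdsWithin heq)
  · have h0 : HasDerivAt (fun t : ℝ => t ^ 2) (2 * x) x := by
      simpa using hasDerivAt_pow 2 x
    have : (2 : ℝ) * max x 0 = 2 * x := by rw [max_eq_left hx.le]
    rw [this]
    apply h0.congr_of_eventuallyEq
    filter_upwards [Ioi_mem_nhds hx] with t ht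
    simp [max_eq_left (le_of_lt (Set.mem_Ioi.mp ht))]

/-- For `f(x) = ρ·max(x,0)` with `ρ, λ > 0`, the Moreau envelope `f_λ` is
differentiable on `ℝ` with derivative `f_λ'(x) = min(max(x,0), λρ)/λ`. -/
theorem stmt14 (ρ lam : ℝ) (hρ : 0 < ρ) (hlam : 0 < lam) :
    ∀ x : ℝ,
      HasDerivAt (fun u : ℝ => ⨅ v : ℝ, ρ * max v 0 + ‖u - v‖ ^ 2 / (2 * lam))
        (min (max x 0) (lam * ρ) / lam) x := by
  have hlam2 : (0:ℝ) < 2 * lam := by linarith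
  have hlr : (0:ℝ) < lam * ρ := mul_pos hlam hρ
  -- closed form of the envelope
  have env_eq : (fun u : ℝ => ⨅ v : ℝ, ρ * max v 0 + ‖u - v‖ ^ 2 / (2 * lam))
      = fun u : ℝ => (max u 0 ^ 2 - max (u - lam * ρ) 0 ^ 2) / (2 * lam) := by
    funext u
    have hnorm : ∀ v : ℝ, ρ * max v 0 + ‖u - v‖ ^ 2 / (2 * lam)
        = ρ * max v 0 + (u - v) ^ 2 / (2 * lam) := by
      intro v; rw [Real.norm_eq_abs, sq_abs]
    have key : ∀ v : ℝ, (max u 0 ^ 2 - max (u - lam * ρ) 0 ^ 2) / (2 * lam)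
        ≤ ρ * max v 0 + ‖u - v‖ ^ 2 / (2 * lam) := by
      intro v
      rw [hnorm v]
      have hsplit : ρ * max v 0 + (u - v) ^ 2 / (2 * lam)
          = (ρ * max v 0 * (2 * lam) + (u - v) ^ 2) / (2 * lam) := by
        field_simp
      rw [hsplit, div_le_div_iff₀ hlam2 hlam2]
      have hmain : max u 0 ^ 2 - max (u - lam * ρ) 0 ^ 2
          ≤ ρ * max v 0 * (2 * lam) + (u - v) ^ 2 := by
        rcases le_total u 0 with hu | hu
        · have h2 : u - lam * ρ ≤ 0 := by linarith
          rcases le_total v 0 with hv | hv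
          · simp [max_eq_right hu, max_eq_right h2, max_eq_right hv]
            positivity
          · simp [max_eq_right hu, max_eq_right h2, max_eq_left hv]
            positivity
        · rcases le_total (u - lam * ρ) 0 with h2 | h2
          · rcases le_total v 0 with hv | hv
            · simp only [max_eq_left hu, max_eq_right h2, max_eq_right hv]
              nlinarith [sq_nonneg (u - v), sq_nonneg v, mul_nonneg hlam.le hρ.le]
            · simp only [max_eq_left hu, max_eq_right h2, max_eq_left hv]
              nlinarith [sq_nonneg (u - v - lam * ρ), sq_nonneg (u - v),
                mul_nonneg hlam.le hρ.le]
          · rcases le_total v 0 with hv | hv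
            · simp only [max_eq_left hu, max_eq_left h2, max_eq_right hv]
              nlinarith [sq_nonneg (u - v), sq_nonneg v, mul_nonneg hlam.le hρ.le,
                sq_nonneg (u - v - lam * ρ)]
            · simp only [max_eq_left hu, max_eq_left h2, max_eq_left hv]
              nlinarith [sq_nonneg (u - v - lam * ρ)]
      exact mul_le_mul_of_nonneg_right hmain hlam2.le
    have hbdd : BddBelow (Set.range
        (fun v : ℝ => ρ * max v 0 + ‖u - v‖ ^ 2 / (2 * lam))) := by
      refine ⟨(max u 0 ^ 2 - max (u - lam * ρ) 0 ^ 2) / (2 * lam), ?_⟩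
      rintro _ ⟨v, rfl⟩
      exact key v
    apply le_antisymm
    · -- pick the minimizer
      rcases le_total u 0 with hu | hu
      · have := ciInf_le hbdd u
        have hval : ρ * max u 0 + ‖u - u‖ ^ 2 / (2 * lam)
            = (max u 0 ^ 2 - max (u - lam * ρ) 0 ^ 2) / (2 * lam) := by
          have h2 : u - lam * ρ ≤ 0 := by linarith
          simp [max_eq_right hu, max_eq_right h2]
        linarith [this, le_of_eq hval.symm]
      · rcases le_total u (lam * ρ) with h2 | h2
        · have := ciInf_le hbdd 0
          have hval : ρ * max (0:ℝ) 0 + ‖u - 0‖ ^ 2 / (2 * lam)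
              = (max u 0 ^ 2 - max (u - lam * ρ) 0 ^ 2) / (2 * lam) := by
            have h3 : u - lam * ρ ≤ 0 := by linarith
            rw [Real.norm_eq_abs, sq_abs]
            simp [max_eq_left hu, max_eq_right h3]
          linarith [this, le_of_eq hval.symm]
        · have := ciInf_le hbdd (u - lam * ρ)
          have hval : ρ * max (u - lam * ρ) 0 + ‖u - (u - lam * ρ)‖ ^ 2 / (2 * lam)
              = (max u 0 ^ 2 - max (u - lam * ρ) 0 ^ 2) / (2 * lam) := by
            have h3 : (0:ℝ) ≤ u - lam * ρ := by linarith
            rw [Real.norm_eq_abs, sq_abs]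
            rw [max_eq_left h3, max_eq_left hu]
            field_simp
            ring
          linarith [this, le_of_eq hval.symm]
    · exact le_ciInf key
  intro x
  rw [env_eq]
  have h1 : HasDerivAt (fun u : ℝ => max u 0 ^ 2) (2 * max x 0) x := sq_max_deriv x
  have h2 : HasDerivAt (fun u : ℝ => max (u - lam * ρ) 0 ^ 2)
      (2 * max (x - lam * ρ) 0) x := by
    have hc : HasDerivAt (fun u : ℝ => u - lam * ρ) 1 x := (hasDerivAt_id x).sub_const _
    have := (sq_max_deriv (x - lam * ρ)).comp x hc
    simpa [Function.comp_def] using this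
  have h3 := (h1.sub h2).div_const (2 * lam)
  have heq : (2 * max x 0 - 2 * max (x - lam * ρ) 0) / (2 * lam)
      = min (max x 0) (lam * ρ) / lam := by
    have hm : max x 0 - max (x - lam * ρ) 0 = min (max x 0) (lam * ρ) := by
      rcases le_total x 0 with hx | hx
      · have h2 : x - lam * ρ ≤ 0 := by linarith
        rw [max_eq_right hx, max_eq_right h2, min_eq_left hlr.le]
        ring
      · rcases le_total x (lam * ρ) with hxl | hxl
        · have h2 : x - lam * ρ ≤ 0 := by linarith
          rw [max_eq_left hx, max_eq_right h2, min_eq_left hxl]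
          ring
        · have h2 : (0:ℝ) ≤ x - lam * ρ := by linarith
          rw [max_eq_left hx, max_eq_left h2, min_eq_right hxl]
          ring
      
    rw [show 2 * max x 0 - 2 * max (x - lam * ρ) 0
        = 2 * (max x 0 - max (x - lam * ρ) 0) by ring, hm]
    field_simp
  rw [heq] at h3
  exact h3
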